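/- arXiv:2108.07642 — 2 statements merged into one kernel-verified Lean document; each statement's English description precedes it below -/
import Mathlib

section
/- The sortedness predicate defined via the tail-shift automatic relation is correct: for a word X ∈ ℤ*, the relation R_{M₁}(X, tail X) holds if and only if X is sorted in (weakly) ascending order, where R_{M₁}(u,v) means that at every position i ≤ |u|, it is not the case that the i-th letter of u exists, the i-th letter of v exists, and uᵢ > vᵢ (positions where v is exhausted impose no constraint beyond the negated comparison being vacuously satisfied by the padding semantics: ¬(a > ⊥) is true). -/
/-- Convolution of two integer words, padding the shorter one at the end with `none` (⊥). -/
def conv2 (u v : List ℤ) : List (Option ℤ × Option ℤ) :=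
  (List.range (max u.length v.length)).map (fun j => (u[j]?, v[j]?))

/-- Correctness of the sortedness predicate via the tail-shift automatic relation:
every letter of `conv2 X (tail X)` satisfies `¬(l₀ > l₁)` (where `>` is false if either
argument is ⊥) iff `X` is sorted in weakly ascending order. -/
theorem sorted_iff_tailShift (X : List ℤ) :
    (∀ a ∈ conv2 X X.tail, ¬ ∃ m n : ℤ, a.1 = some m ∧ a.2 = some n ∧ m > n) ↔
      List.Chain' (· ≤ ·) X := by
  simp only [conv2, List.mem_map, List.mem_range, List.getElem?_tail]
  rw [show List.Chain' (· ≤ ·) X ↔ List.IsChain (· ≤ ·) X from Iff.rfl, List.isChain_iff_getElem]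
  constructor
  · intro h i hi
    have hj : i < max X.length X.tail.length := by
      simp [List.length_tail]; omega
    by_contra hlt
    exact h _ ⟨i, hj, rfl⟩ ⟨X.get ⟨i, by omega⟩, X.get ⟨i+1, by omega⟩, by
      simp [List.getElem?_eq_getElem], by simp [List.getElem?_eq_getElem], by simp only [List.get_eq_getElem]; omega⟩
  · rintro h a ⟨j, hj, rfl⟩ ⟨m, n, hm, hn, hmn⟩
    simp only at hm hn
    have hjn : j + 1 < X.length := by
      by_contra hc
      rw [List.getElem?_eq_none (by omega)] at hn
      exact absurd hn (by simp)
    have := h j (by omega)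
    rw [List.getElem?_eq_getElem (by omega)] at hm
    rw [List.getElem?_eq_getElem (by omega)] at hn
    simp only [Option.some.injEq] at hm hn
    simp [List.get_eq_getElem, hm, hn] at this
    omega
end

section
/- Correctness of the nth-element encoding via a counter list: for i ≥ 0, x ∈ ℤ, and X ∈ ℤ*, there exists Y ∈ ℤ* such that the synchronized run condition of M₂(x) on (i·Y, Y, X) holds — namely there exists a position m with 1 ≤ m ≤ |conv(i·Y, Y, X)| such that the first component at position m is 0 and the third component is x, and for all positions p < m the first component equals the second component plus 1 — if and only if 1 ≤ i+1 ≤ |X| and the (i+1)-th element of X equals x (using 0-based index i). -/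
/-- Convolution of three integer words, padding shorter ones at the end with `none` (⊥). -/
def conv3 (u v w : List ℤ) : List (Option ℤ × Option ℤ × Option ℤ) :=
  (List.range (max u.length (max v.length w.length))).map
    (fun j => (u[j]?, v[j]?, w[j]?))

lemma conv3_length (u v w : List ℤ) :
    (conv3 u v w).length = max u.length (max v.length w.length) := by
  simp [conv3]

lemma conv3_fst (u v w : List ℤ) (j : ℕ) (hj : j < (conv3 u v w).length) :
    ((conv3 u v w)[j]).1 = u[j]? := by
  simp [conv3]

lemma conv3_snd (u v w : List ℤ) (j : ℕ) (hj : j < (conv3 u v w).length) :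
    ((conv3 u v w)[j]).2.1 = v[j]? := by
  simp [conv3]

lemma conv3_thd (u v w : List ℤ) (j : ℕ) (hj : j < (conv3 u v w).length) :
    ((conv3 u v w)[j]).2.2 = w[j]? := by
  simp [conv3]

lemma ctr_get (i p : ℕ) (hp : p < i) :
    ((List.range i).map (fun p : ℕ => (i : ℤ) - p - 1))[p]? = some ((i : ℤ) - p - 1) := by
  simp [List.getElem?_map, List.getElem?_range, hp]

/-- Correctness of the nth-element encoding via a counter list: there is a counter list
`Y` making the synchronized run condition of `M₂(x)` on `(i·Y, Y, X)` hold iff the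
`i`-th (0-based) element of `X` exists and equals `x`. -/
theorem nth_encoding_correct (i : ℕ) (x : ℤ) (X : List ℤ) :
    (∃ Y : List ℤ,
        ∃ m, ∃ hm : m < (conv3 ((i : ℤ) :: Y) Y X).length,
          ((conv3 ((i : ℤ) :: Y) Y X)[m]).1 = some 0 ∧
          ((conv3 ((i : ℤ) :: Y) Y X)[m]).2.2 = some x ∧
          ∀ p, ∀ hp : p < m,
            ∃ a b : ℤ,
              ((conv3 ((i : ℤ) :: Y) Y X)[p]'(hp.trans hm)).1 = some a ∧
              ((conv3 ((i : ℤ) :: Y) Y X)[p]'(hp.trans hm)).2.1 = some b ∧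
              a = b + 1) ↔
      i < X.length ∧ X[i]? = some x := by
  constructor
  · rintro ⟨Y, m, hm, h0, hx, hchain⟩
    rw [conv3_fst] at h0
    rw [conv3_thd] at hx
    have hc : ∀ p, p < m → ∃ a b : ℤ,
        (((i : ℤ) :: Y))[p]? = some a ∧ Y[p]? = some b ∧ a = b + 1 := by
      intro p hp
      obtain ⟨a, b, h1, h2, h3⟩ := hchain p hp
      rw [conv3_fst] at h1
      rw [conv3_snd] at h2
      exact ⟨a, b, h1, h2, h3⟩
    have key : ∀ p, p ≤ m → (((i : ℤ) :: Y))[p]? = some ((i : ℤ) - p) := by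
      intro p
      induction p with
      | zero => intro _; simp
      | succ q ih =>
        intro hq
        have hq' : q < m := by omega
        obtain ⟨a, b, h1, h2, h3⟩ := hc q hq'
        have hih := ih (le_of_lt hq')
        rw [hih] at h1
        have ha : a = (i : ℤ) - q := by injection h1 with h; omega
        have hcons : (((i : ℤ) :: Y))[q + 1]? = Y[q]? := by simp
        rw [hcons, h2]
        congr 1
        push_cast
        omega
    have hm0 := key m le_rfl
    rw [hm0] at h0
    have h0' : (i : ℤ) - m = 0 := by injection h0
    have him : i = m := by omega
    subst him
    have hlt : i < X.length := by
      by_contra h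
      rw [List.getElem?_eq_none (by omega)] at hx
      cases hx
    exact ⟨hlt, hx⟩
  · rintro ⟨hi, hx⟩
    refine ⟨(List.range i).map (fun p : ℕ => (i : ℤ) - p - 1), i, ?_, ?_, ?_, ?_⟩
    · rw [conv3_length]
      simp
    · rw [conv3_fst]
      cases i with
      | zero => simp
      | succ q =>
        have hcons : (((q + 1 : ℕ) : ℤ) ::
            (List.range (q + 1)).map (fun p : ℕ => ((q + 1 : ℕ) : ℤ) - p - 1))[q + 1]? =
            ((List.range (q + 1)).map (fun p : ℕ => ((q + 1 : ℕ) : ℤ) - p - 1))[q]? := by simp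
        rw [hcons, ctr_get (q + 1) q (by omega)]
        congr 1
        push_cast
        ring
    · rw [conv3_thd]
      exact hx
    · intro p hp
      refine ⟨(i : ℤ) - p, (i : ℤ) - p - 1, ?_, ?_, by ring⟩
      · rw [conv3_fst]
        cases p with
        | zero => simp
        | succ q =>
          have hcons : (((i : ℕ) : ℤ) ::
              (List.range i).map (fun p : ℕ => (i : ℤ) - p - 1))[q + 1]? =
              ((List.range i).map (fun p : ℕ => (i : ℤ) - p - 1))[q]? := by simp
          rw [hcons, ctr_get i q (by omega)]
          congr 1
          push_cast
          ring
      · rw [conv3_snd]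
        exact ctr_get i p hp
end
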